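/- For any n-player m-action game with payoffs in [0,1] and any ε > 0, if k > ⌊2(ln m + ln n)/ε²⌋ then there exists a multiset of k action profiles such that the uniform distribution over this multiset is an ε-coarse correlated equilibrium. -/

import Mathlib

open Finset

section Game
variable {n m : ℕ}

lemma prod_split (i : Fin n) (f : Fin n → ℝ) :
    ∏ i', f i' = f i * ∏ c : {j' : Fin n // j' ≠ i}, f c.1 := by
  rw [← Finset.prod_subtype (univ \ {i})
    (fun c => by simp [Finset.mem_sdiff]) (fun i' => f i')]
  exact Finset.prod_eq_mul_prod_sdiff_singleton_of_mem (mem_univ i) _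

lemma comp1 (i : Fin n) (x : Fin m) (b : {j' : Fin n // j' ≠ i} → Fin m) :
    (Equiv.piSplitAt i (fun _ : Fin n => Fin m)).symm (x, b) i = x := by
  simp [Equiv.piSplitAt]

lemma comp2 (i : Fin n) (x : Fin m) (b : {j' : Fin n // j' ≠ i} → Fin m)
    (c : {j' : Fin n // j' ≠ i}) :
    (Equiv.piSplitAt i (fun _ : Fin n => Fin m)).symm (x, b) c.1 = b c := by
  simp [Equiv.piSplitAt, c.2]

lemma update_symm (i : Fin n) (j x : Fin m)
    (b : {j' : Fin n // j' ≠ i} → Fin m) :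
    Function.update ((Equiv.piSplitAt i (fun _ : Fin n => Fin m)).symm (x, b)) i j
      = (Equiv.piSplitAt i (fun _ : Fin n => Fin m)).symm (j, b) := by
  funext y
  rcases eq_or_ne y i with rfl | hy
  · simp [Equiv.piSplitAt]
  · simp [Equiv.piSplitAt, Function.update, hy]

lemma gain_rewrite (u : Fin n → (Fin n → Fin m) → ℝ) (σ : Fin n → Fin m → ℝ)
    (hσ1 : ∀ i', ∑ j', σ i' j' = 1) (i : Fin n) (j : Fin m) :
    ∑ a : Fin n → Fin m, (∏ i', σ i' (a i')) * u i (Function.update a i j)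
      = ∑ b : {j' : Fin n // j' ≠ i} → Fin m,
          (∏ c, σ c.1 (b c)) * u i ((Equiv.piSplitAt i (fun _ : Fin n => Fin m)).symm (j, b)) := by
  rw [← Equiv.sum_comp (Equiv.piSplitAt i (fun _ : Fin n => Fin m)).symm
      (fun a => (∏ i', σ i' (a i')) * u i (Function.update a i j)), Fintype.sum_prod_type]
  have step : ∀ (x : Fin m) (b : {j' : Fin n // j' ≠ i} → Fin m),
      (∏ i', σ i' ((Equiv.piSplitAt i (fun _ : Fin n => Fin m)).symm (x, b) i'))
        * u i (Function.update ((Equiv.piSplitAt i (fun _ : Fin n => Fin m)).symm (x, b)) i j)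
      = σ i x * ((∏ c, σ c.1 (b c))
          * u i ((Equiv.piSplitAt i (fun _ : Fin n => Fin m)).symm (j, b))) := by
    intro x b
    rw [prod_split i, comp1, update_symm]
    have : (∏ c : {j' : Fin n // j' ≠ i},
        σ c.1 ((Equiv.piSplitAt i (fun _ : Fin n => Fin m)).symm (x, b) c.1))
        = ∏ c : {j' : Fin n // j' ≠ i}, σ c.1 (b c) :=
      Finset.prod_congr rfl fun c _ => by rw [comp2]
    rw [this, mul_assoc]
  simp only [step, ← Finset.sum_mul, ← Finset.mul_sum]
  rw [hσ1 i, one_mul]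

lemma val_rewrite (u : Fin n → (Fin n → Fin m) → ℝ) (σ : Fin n → Fin m → ℝ) (i : Fin n) :
    ∑ a : Fin n → Fin m, (∏ i', σ i' (a i')) * u i a
      = ∑ x : Fin m, σ i x * ∑ b : {j' : Fin n // j' ≠ i} → Fin m,
          (∏ c, σ c.1 (b c)) * u i ((Equiv.piSplitAt i (fun _ : Fin n => Fin m)).symm (x, b)) := by
  rw [← Equiv.sum_comp (Equiv.piSplitAt i (fun _ : Fin n => Fin m)).symm
      (fun a => (∏ i', σ i' (a i')) * u i a), Fintype.sum_prod_type]
  refine Finset.sum_congr rfl fun x _ => ?_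
  rw [Finset.mul_sum]
  refine Finset.sum_congr rfl fun b _ => ?_
  rw [prod_split i, comp1]
  have : (∏ c : {j' : Fin n // j' ≠ i},
      σ c.1 ((Equiv.piSplitAt i (fun _ : Fin n => Fin m)).symm (x, b) c.1))
      = ∏ c : {j' : Fin n // j' ≠ i}, σ c.1 (b c) :=
    Finset.prod_congr rfl fun c _ => by rw [comp2]
  rw [this, mul_assoc]


lemma exp_le_cosh_add_mul_sinh (t z : ℝ) (hz : z ∈ Set.Icc (-1:ℝ) 1) :
    Real.exp (t * z) ≤ Real.cosh t + z * Real.sinh t := by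
  have ha : (0:ℝ) ≤ (1 - z)/2 := by linarith [hz.2]
  have hb : (0:ℝ) ≤ (1 + z)/2 := by linarith [hz.1]
  have hab : (1 - z)/2 + (1 + z)/2 = (1:ℝ) := by ring
  have h := convexOn_exp.2 (Set.mem_univ (-t)) (Set.mem_univ t) ha hb hab
  simp only [smul_eq_mul] at h
  have e1 : (1 - z)/2 * (-t) + (1 + z)/2 * t = t * z := by ring
  rw [e1] at h
  refine h.trans_eq ?_
  rw [Real.cosh_eq, Real.sinh_eq]
  ring

lemma mwu {m : ℕ} (hm : 0 < m) {η : ℝ} (hη : 0 < η) (g : ℕ → Fin m → ℝ)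
    (hg : ∀ t j, g t j ∈ Set.Icc (-1:ℝ) 1)
    (p : ℕ → Fin m → ℝ)
    (hp : ∀ t j, p t j = Real.exp (η * ∑ s ∈ range t, g s j) /
        ∑ j', Real.exp (η * ∑ s ∈ range t, g s j'))
    (T : ℕ) (j : Fin m) :
    ∑ t ∈ range T, g t j ≤ (∑ t ∈ range T, ∑ j', p t j' * g t j')
      + Real.log m / η + T * (2*η) := by
  haveI : Nonempty (Fin m) := Fin.pos_iff_nonempty.mp hm
  set w : ℕ → Fin m → ℝ := fun t j => Real.exp (η * ∑ s ∈ range t, g s j) with hw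
  set W : ℕ → ℝ := fun t => ∑ j', w t j' with hWdef
  have hWpos : ∀ t, 0 < W t := fun t =>
    Finset.sum_pos (fun j' _ => Real.exp_pos _) univ_nonempty
  set μ : ℕ → ℝ := fun t => ∑ j', p t j' * g t j' with hμ
  have hpsum : ∀ t, ∑ j', p t j' = 1 := by
    intro t
    simp only [hp, ← Finset.sum_div]
    exact div_self (hWpos t).ne'
  have hppos : ∀ t j', 0 ≤ p t j' := by
    intro t j'; rw [hp]
    exact div_nonneg (Real.exp_pos _).le (hWpos t).le
  have hμmem : ∀ t, μ t ∈ Set.Icc (-1:ℝ) 1 := by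
    intro t
    constructor
    · have : ∑ j', p t j' * (-1:ℝ) ≤ μ t :=
        Finset.sum_le_sum fun j' _ => by
          have := (hg t j').1
          nlinarith [hppos t j']
      simpa [← Finset.sum_mul, hpsum t] using this
    · have : μ t ≤ ∑ j', p t j' * (1:ℝ) :=
        Finset.sum_le_sum fun j' _ => by
          have := (hg t j').2
          nlinarith [hppos t j']
      simpa [← Finset.sum_mul, hpsum t] using this
  have key : ∀ t, W (t+1) ≤ W t * Real.exp (η * μ t + 2*η^2) := by
    intro t
    have hW1 : W (t+1) = W t * ∑ j', p t j' * Real.exp (η * g t j') := by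
      rw [Finset.mul_sum]
      refine Finset.sum_congr rfl fun j' _ => ?_
      rw [hp]
      have : w (t+1) j' = w t j' * Real.exp (η * g t j') := by
        simp only [hw, Finset.sum_range_succ, mul_add, Real.exp_add]
      rw [this]
      field_simp
      exact mul_comm _ _
    rw [hW1]
    have hstep : ∑ j', p t j' * Real.exp (η * g t j') ≤ Real.exp (η * μ t + 2*η^2) := by
      have hb : ∀ j', p t j' * Real.exp (η * g t j')
          ≤ p t j' * (Real.exp (η * μ t) * (Real.cosh (2*η) + (g t j' - μ t)/2 * Real.sinh (2*η))) := by
        intro j'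
        refine mul_le_mul_of_nonneg_left ?_ (hppos t j')
        have hz : (g t j' - μ t)/2 ∈ Set.Icc (-1:ℝ) 1 := by
          constructor
          · have := (hg t j').1; have := (hμmem t).2; linarith
          · have := (hg t j').2; have := (hμmem t).1; linarith
        have hco := exp_le_cosh_add_mul_sinh (2*η) ((g t j' - μ t)/2) hz
        have : Real.exp (η * g t j') = Real.exp (η * μ t) * Real.exp (2*η * ((g t j' - μ t)/2)) := by
          rw [← Real.exp_add]; ring_nf
        rw [this]
        exact mul_le_mul_of_nonneg_left hco (Real.exp_pos _).le
      calc ∑ j', p t j' * Real.exp (η * g t j')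
          ≤ ∑ j', p t j' * (Real.exp (η * μ t) * (Real.cosh (2*η) + (g t j' - μ t)/2 * Real.sinh (2*η))) :=
            Finset.sum_le_sum fun j' _ => hb j'
        _ = Real.exp (η * μ t) * Real.cosh (2*η) := by
            have e : ∀ j', p t j' * (Real.exp (η * μ t) * (Real.cosh (2*η) + (g t j' - μ t)/2 * Real.sinh (2*η)))
                = (Real.exp (η * μ t) * Real.cosh (2*η)) * p t j'
                  + (Real.exp (η * μ t) * Real.sinh (2*η) / 2) * (p t j' * g t j')
                  - (Real.exp (η * μ t) * Real.sinh (2*η) / 2 * μ t) * p t j' := by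
              intro j'; ring
            simp only [e, Finset.sum_add_distrib, Finset.sum_sub_distrib,
              ← Finset.mul_sum, hpsum t, ← hμ]
            ring
        _ ≤ Real.exp (η * μ t) * Real.exp (2*η^2) := by
            have := Real.cosh_le_exp_half_sq (2*η)
            have e2 : (2*η)^2/2 = 2*η^2 := by ring
            rw [e2] at this
            exact mul_le_mul_of_nonneg_left this (Real.exp_pos _).le
        _ = Real.exp (η * μ t + 2*η^2) := (Real.exp_add _ _).symm
    exact mul_le_mul_of_nonneg_left hstep (hWpos t).le
  have main : ∀ T, W T ≤ (m:ℝ) * Real.exp (η * (∑ t ∈ range T, μ t) + T * (2*η^2)) := by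
    intro T
    induction T with
    | zero => simp [hWdef, hw]
    | succ T ih =>
        calc W (T+1) ≤ W T * Real.exp (η * μ T + 2*η^2) := key T
          _ ≤ (m:ℝ) * Real.exp (η * (∑ t ∈ range T, μ t) + T * (2*η^2)) * Real.exp (η * μ T + 2*η^2) :=
              mul_le_mul_of_nonneg_right ih (Real.exp_pos _).le
          _ = (m:ℝ) * Real.exp (η * (∑ t ∈ range (T+1), μ t) + ((T+1 : ℕ) : ℝ) * (2*η^2)) := by
              rw [mul_assoc, ← Real.exp_add, Finset.sum_range_succ]
              congr 1
              push_cast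
              ring
  have hwle : w T j ≤ W T :=
    Finset.single_le_sum (f := fun j' => w T j') (fun j' _ => (Real.exp_pos _).le)
      (Finset.mem_univ j)
  have hfin : Real.exp (η * ∑ t ∈ range T, g t j)
      ≤ (m:ℝ) * Real.exp (η * (∑ t ∈ range T, μ t) + T * (2*η^2)) := le_trans hwle (main T)
  have hlog := Real.log_le_log (Real.exp_pos _) hfin
  rw [Real.log_exp, Real.log_mul (by positivity) (Real.exp_pos _).ne', Real.log_exp] at hlog
  have hηT : η * ∑ t ∈ range T, g t j ≤ Real.log m + η * (∑ t ∈ range T, μ t) + T * (2*η^2) := by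
    linarith
  have h2 : ∑ t ∈ range T, g t j
      ≤ (Real.log m + η * (∑ t ∈ range T, μ t) + T * (2*η^2)) / η := by
    rw [le_div_iff₀ hη]
    linarith [hηT]
  have h3 : (Real.log m + η * (∑ t ∈ range T, μ t) + T * (2*η^2)) / η
      = (∑ t ∈ range T, μ t) + Real.log m / η + T * (2*η) := by
    field_simp
    ring
  rw [h3] at h2
  exact h2.trans_eq (by rw [hμ])


lemma exists_approx_cce (n m : ℕ) (hn : 0 < n) (hm : 0 < m)
    (u : Fin n → (Fin n → Fin m) → ℝ) (hu : ∀ i a, u i a ∈ Set.Icc (0:ℝ) 1)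
    (ε' : ℝ) (hε' : 0 < ε') :
    ∃ p : (Fin n → Fin m) → ℝ, (∀ a, 0 ≤ p a) ∧ (∑ a, p a = 1) ∧
      ∀ i j, ∑ a, p a * (u i (Function.update a i j) - u i a) ≤ ε' := by
  haveI : Nonempty (Fin m) := Fin.pos_iff_nonempty.mp hm
  set η : ℝ := ε'/4 with hηdef
  have hη : 0 < η := by positivity
  set σof : (Fin n → Fin m → ℝ) → Fin n → Fin m → ℝ :=
    fun H i j => Real.exp (η * H i j) / ∑ j', Real.exp (η * H i j') with hσofdef
  have hWpos : ∀ (H : Fin n → Fin m → ℝ) i, 0 < ∑ j', Real.exp (η * H i j') :=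
    fun H i => Finset.sum_pos (fun j' _ => Real.exp_pos _) univ_nonempty
  have hσof0 : ∀ H i j, 0 ≤ σof H i j :=
    fun H i j => div_nonneg (Real.exp_pos _).le (hWpos H i).le
  have hσof1 : ∀ H i, ∑ j, σof H i j = 1 := by
    intro H i
    simp only [hσofdef, ← Finset.sum_div]
    exact div_self (hWpos H i).ne'
  set gain : (Fin n → Fin m → ℝ) → Fin n → Fin m → ℝ :=
    fun σ i j => ∑ a : Fin n → Fin m, (∏ i', σ i' (a i')) * u i (Function.update a i j)
    with hgaindef
  set G : ℕ → Fin n → Fin m → ℝ :=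
    fun t => Nat.rec (motive := fun _ => Fin n → Fin m → ℝ) (fun _ _ => 0)
      (fun _ Gt => fun i j => Gt i j + gain (σof Gt) i j) t with hGdef
  set σ : ℕ → Fin n → Fin m → ℝ := fun t => σof (G t) with hσdef
  have hGsum : ∀ t i j, G t i j = ∑ s ∈ range t, gain (σ s) i j := by
    intro t
    induction t with
    | zero => intro i j; simp [hGdef]
    | succ t ih =>
        intro i j
        have : G (t+1) i j = G t i j + gain (σ t) i j := rfl
        rw [this, Finset.sum_range_succ, ih]
  -- each σ t is a (positive) mixed profile
  have hσ0 : ∀ t i j, 0 ≤ σ t i j := fun t => hσof0 (G t)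
  have hσ1 : ∀ t i, ∑ j, σ t i j = 1 := fun t => hσof1 (G t)
  -- the product measure sums to 1
  have hsum1 : ∀ t, ∑ a : Fin n → Fin m, ∏ i', σ t i' (a i') = 1 := by
    intro t
    rw [← Fintype.prod_sum]
    simp [hσ1 t]
  -- gain bounds
  have hgain0 : ∀ t i j, 0 ≤ gain (σ t) i j := by
    intro t i j
    refine Finset.sum_nonneg fun a _ => mul_nonneg ?_ (hu i _).1
    exact Finset.prod_nonneg fun i' _ => hσ0 t i' _
  have hgain1 : ∀ t i j, gain (σ t) i j ≤ 1 := by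
    intro t i j
    calc gain (σ t) i j ≤ ∑ a : Fin n → Fin m, (∏ i', σ t i' (a i')) * 1 :=
          Finset.sum_le_sum fun a _ => mul_le_mul_of_nonneg_left (hu i _).2
            (Finset.prod_nonneg fun i' _ => hσ0 t i' _)
      _ = 1 := by simp only [mul_one]; exact hsum1 t
  -- the key identity : expected own payoff
  have F3 : ∀ t i, ∑ j', σ t i j' * gain (σ t) i j'
      = ∑ a : Fin n → Fin m, (∏ i', σ t i' (a i')) * u i a := by
    intro t i
    rw [val_rewrite u (σ t) i]
    refine Finset.sum_congr rfl fun j' _ => ?_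
    have hg : gain (σ t) i j' = ∑ a : Fin n → Fin m,
        (∏ i', σ t i' (a i')) * u i (Function.update a i j') := rfl
    rw [hg, gain_rewrite u (σ t) (hσ1 t) i j']
  -- choose the horizon
  set T : ℕ := max 1 ⌈Real.log m / (η * (ε'/2))⌉₊ with hTdef
  have hT0 : 0 < T := lt_of_lt_of_le one_pos (le_max_left _ _)
  have hTr : (0:ℝ) < T := by exact_mod_cast hT0
  -- MWU regret bound for each player
  have regret : ∀ i j, ∑ t ∈ range T, gain (σ t) i j
      ≤ (∑ t ∈ range T, ∑ a : Fin n → Fin m, (∏ i', σ t i' (a i')) * u i a)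
        + Real.log m / η + T * (2*η) := by
    intro i j
    have := mwu hm hη (fun t j' => gain (σ t) i j')
      (fun t j' => ⟨le_trans (by norm_num) (hgain0 t i j'), hgain1 t i j'⟩)
      (fun t j' => σ t i j')
      (by
        intro t j'
        have h1 : ∀ j'', η * ∑ s ∈ range t, gain (σ s) i j'' = η * G t i j'' := by
          intro j''; rw [hGsum t i j'']
        simp only [h1]; rfl) T j
    refine this.trans ?_
    have : ∀ t, ∑ j', σ t i j' * gain (σ t) i j'
        = ∑ a : Fin n → Fin m, (∏ i', σ t i' (a i')) * u i a := fun t => F3 t i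
    rw [Finset.sum_congr rfl fun t _ => this t]
  -- define the empirical average distribution
  refine ⟨fun a => (∑ t ∈ range T, ∏ i', σ t i' (a i')) / T, ?_, ?_, ?_⟩
  · intro a
    refine div_nonneg (Finset.sum_nonneg fun t _ => ?_) hTr.le
    exact Finset.prod_nonneg fun i' _ => hσ0 t i' _
  · rw [← Finset.sum_div]
    rw [Finset.sum_comm]
    simp only [hsum1]
    rw [Finset.sum_const, Finset.card_range, nsmul_eq_mul, mul_one]
    exact div_self hTr.ne'
  · intro i j
    have expand : ∑ a : Fin n → Fin m,
        ((∑ t ∈ range T, ∏ i', σ t i' (a i')) / T) * (u i (Function.update a i j) - u i a)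
        = ((∑ t ∈ range T, gain (σ t) i j)
            - ∑ t ∈ range T, ∑ a : Fin n → Fin m, (∏ i', σ t i' (a i')) * u i a) / T := by
      have e1 : ∀ a : Fin n → Fin m,
          ((∑ t ∈ range T, ∏ i', σ t i' (a i')) / T) * (u i (Function.update a i j) - u i a)
          = (∑ t ∈ range T, (∏ i', σ t i' (a i')) * (u i (Function.update a i j) - u i a)) / T := by
        intro a
        rw [div_mul_eq_mul_div, Finset.sum_mul]
      rw [Finset.sum_congr rfl fun a _ => e1 a, ← Finset.sum_div, Finset.sum_comm]
      congr 1
      rw [← Finset.sum_sub_distrib]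
      refine Finset.sum_congr rfl fun t _ => ?_
      have hg : gain (σ t) i j = ∑ a : Fin n → Fin m,
          (∏ i', σ t i' (a i')) * u i (Function.update a i j) := rfl
      rw [hg, ← Finset.sum_sub_distrib]
      exact Finset.sum_congr rfl fun a _ => by ring
    rw [expand, div_le_iff₀ hTr]
    have hreg := regret i j
    have hlogm : (0:ℝ) ≤ Real.log m := Real.log_nonneg (by exact_mod_cast hm)
    have hTceil : Real.log m / (η * (ε'/2)) ≤ (T:ℝ) := by
      refine le_trans (Nat.le_ceil _) ?_
      exact_mod_cast Nat.cast_le.mpr (le_max_right 1 ⌈Real.log m / (η * (ε'/2))⌉₊)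
    have h2 : Real.log m ≤ (T:ℝ) * (η * (ε'/2)) := by
      rw [div_le_iff₀ (by positivity)] at hTceil
      linarith
    have h3 : Real.log m / η ≤ (T:ℝ) * (ε'/2) := by
      rw [div_le_iff₀ hη]
      nlinarith
    have h4 : η = ε'/4 := hηdef
    nlinarith [hreg, h3]


lemma sampling {C Ω : Type*} [Fintype C] [Fintype Ω] (k : ℕ) (hk : 0 < k)
    (f : C → Ω → ℝ) (hf : ∀ c a, f c a ∈ Set.Icc (-1:ℝ) 1)
    (p : Ω → ℝ) (hp0 : ∀ a, 0 ≤ p a) (hp1 : ∑ a, p a = 1)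
    (ε ε' : ℝ) (hε : 0 < ε) (hε' : 0 ≤ ε')
    (hmean : ∀ c, ∑ a, p a * f c a ≤ ε')
    (hsmall : (Fintype.card C : ℝ) * Real.exp (-(k*ε*ε))
        * (Real.cosh ε + ε' * Real.sinh ε)^k < 1) :
    ∃ D : Fin k → Ω, ∀ c, ∑ l, f c (D l) ≤ k * ε := by
  by_contra hcon
  push_neg at hcon
  set q : (Fin k → Ω) → ℝ := fun D => ∏ l, p (D l) with hqdef
  have hq0 : ∀ D, 0 ≤ q D := fun D => Finset.prod_nonneg fun l _ => hp0 _
  have hq1 : ∑ D, q D = 1 := by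
    rw [← Fintype.sum_pow p k, hp1, one_pow]
  set E : (Fin k → Ω) → ℝ := fun D => ∑ c, Real.exp (ε * (∑ l, f c (D l)) - k*ε*ε)
    with hEdef
  have hE1 : ∀ D, 1 < E D := by
    intro D
    obtain ⟨c, hc⟩ := hcon D
    have h1 : Real.exp 0 < Real.exp (ε * (∑ l, f c (D l)) - k*ε*ε) := by
      rw [Real.exp_lt_exp]
      nlinarith
    rw [Real.exp_zero] at h1
    calc (1:ℝ) < Real.exp (ε * (∑ l, f c (D l)) - k*ε*ε) := h1
      _ ≤ E D := Finset.single_le_sum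
          (f := fun c => Real.exp (ε * (∑ l, f c (D l)) - k*ε*ε))
          (fun c _ => (Real.exp_pos _).le) (Finset.mem_univ c)
  have hlt : (1:ℝ) < ∑ D, q D * E D := by
    obtain ⟨D₀, hD₀⟩ : ∃ D, 0 < q D := by
      by_contra hno
      push_neg at hno
      have : ∑ D, q D ≤ 0 := Finset.sum_nonpos fun D _ => hno D
      linarith [hq1]
    rw [← hq1]
    refine Finset.sum_lt_sum (fun D _ => ?_) ⟨D₀, Finset.mem_univ D₀, ?_⟩
    · nth_rewrite 1 [← mul_one (q D)]
      exact mul_le_mul_of_nonneg_left (hE1 D).le (hq0 D)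
    · nth_rewrite 1 [← mul_one (q D₀)]
      exact mul_lt_mul_of_pos_left (hE1 D₀) hD₀
  have e1 : ∀ D, q D * E D
      = ∑ c, Real.exp (-(k*ε*ε)) * ∏ l, (p (D l) * Real.exp (ε * f c (D l))) := by
    intro D
    rw [hEdef, Finset.mul_sum]
    refine Finset.sum_congr rfl fun c _ => ?_
    calc q D * Real.exp (ε * (∑ l, f c (D l)) - k*ε*ε)
        = Real.exp (-(k*ε*ε)) * (q D * Real.exp (∑ l, ε * f c (D l))) := by
          rw [← Finset.mul_sum, sub_eq_neg_add, Real.exp_add]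
          ring
      _ = Real.exp (-(k*ε*ε)) * ∏ l, (p (D l) * Real.exp (ε * f c (D l))) := by
          rw [Real.exp_sum, hqdef, ← Finset.prod_mul_distrib]
  have hswap : ∑ D, q D * E D
      = ∑ c, Real.exp (-(k*ε*ε)) * (∑ a, p a * Real.exp (ε * f c a))^k := by
    rw [Finset.sum_congr rfl fun D _ => e1 D, Finset.sum_comm]
    refine Finset.sum_congr rfl fun c _ => ?_
    rw [← Finset.mul_sum, ← Fintype.sum_pow (fun a => p a * Real.exp (ε * f c a)) k]
  have hBc : ∀ c, ∑ a, p a * Real.exp (ε * f c a) ≤ Real.cosh ε + ε' * Real.sinh ε := by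
    intro c
    have step : ∀ a, p a * Real.exp (ε * f c a)
        ≤ p a * (Real.cosh ε + f c a * Real.sinh ε) := fun a =>
      mul_le_mul_of_nonneg_left (exp_le_cosh_add_mul_sinh ε (f c a) (hf c a)) (hp0 a)
    have e2 : ∀ a, p a * (Real.cosh ε + f c a * Real.sinh ε)
        = Real.cosh ε * p a + Real.sinh ε * (p a * f c a) := fun a => by ring
    calc ∑ a, p a * Real.exp (ε * f c a)
        ≤ ∑ a, p a * (Real.cosh ε + f c a * Real.sinh ε) :=
          Finset.sum_le_sum fun a _ => step a
      _ = Real.cosh ε + Real.sinh ε * ∑ a, p a * f c a := by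
          simp only [e2, Finset.sum_add_distrib, ← Finset.mul_sum, hp1, mul_one]
      _ ≤ Real.cosh ε + ε' * Real.sinh ε := by
          have hs : 0 ≤ Real.sinh ε := Real.sinh_nonneg_iff.mpr hε.le
          nlinarith [hmean c]
  have hnn : ∀ c, 0 ≤ ∑ a, p a * Real.exp (ε * f c a) :=
    fun c => Finset.sum_nonneg fun a _ => mul_nonneg (hp0 a) (Real.exp_pos _).le
  have hfinal : ∑ D, q D * E D
      ≤ (Fintype.card C : ℝ) * Real.exp (-(k*ε*ε)) * (Real.cosh ε + ε' * Real.sinh ε)^k := by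
    rw [hswap]
    calc ∑ c, Real.exp (-(k*ε*ε)) * (∑ a, p a * Real.exp (ε * f c a))^k
        ≤ ∑ c : C, Real.exp (-(k*ε*ε)) * (Real.cosh ε + ε' * Real.sinh ε)^k :=
          Finset.sum_le_sum fun c _ => mul_le_mul_of_nonneg_left
            (pow_le_pow_left₀ (hnn c) (hBc c) k) (Real.exp_pos _).le
      _ = (Fintype.card C : ℝ) * Real.exp (-(k*ε*ε)) * (Real.cosh ε + ε' * Real.sinh ε)^k := by
          rw [Finset.sum_const, Finset.card_univ, nsmul_eq_mul]; ring
  linarith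

end Game

/-- Every n-player m-action game with payoffs in [0,1] admits a k-uniform
    ε-coarse correlated equilibrium whenever `k > ⌊2(ln m + ln n)/ε²⌋`. -/
theorem exists_kUniform_epsCCE (n m : ℕ) (hn : 0 < n) (hm : 0 < m)
    (u : Fin n → (Fin n → Fin m) → ℝ)
    (hu : ∀ i a, u i a ∈ Set.Icc (0 : ℝ) 1)
    (ε : ℝ) (hε : 0 < ε)
    (k : ℕ) (hk : (k : ℤ) > ⌊2 * (Real.log m + Real.log n) / ε ^ 2⌋) :
    ∃ D : Fin k → (Fin n → Fin m),
      ∀ i : Fin n, ∀ j : Fin m,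
        (∑ l : Fin k, (u i (Function.update (D l) i j) - u i (D l))) / k ≤ ε := by
  have hlm : (0:ℝ) ≤ Real.log m := Real.log_nonneg (by exact_mod_cast hm)
  have hln : (0:ℝ) ≤ Real.log n := Real.log_nonneg (by exact_mod_cast hn)
  have hL : (0:ℝ) ≤ 2 * (Real.log m + Real.log n) / ε ^ 2 := by
    apply div_nonneg (by linarith) (by positivity)
  have hk0 : 0 < k := by
    rcases Nat.eq_zero_or_pos k with rfl | h
    · exfalso
      have : (0:ℤ) ≤ ⌊2 * (Real.log m + Real.log n) / ε ^ 2⌋ := Int.floor_nonneg.mpr hL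
      omega
    · exact h
  have hkr : (0:ℝ) < k := by exact_mod_cast hk0
  have hkR : 2 * (Real.log m + Real.log n) / ε ^ 2 < (k:ℝ) := by
    calc 2 * (Real.log m + Real.log n) / ε ^ 2
        < (⌊2 * (Real.log m + Real.log n) / ε ^ 2⌋ : ℝ) + 1 := Int.lt_floor_add_one _
      _ ≤ (k:ℝ) := by exact_mod_cast hk
  have hδ : 0 < (k:ℝ) * ε^2 / 2 - (Real.log m + Real.log n) := by
    rw [div_lt_iff₀ (by positivity)] at hkR
    nlinarith
  set δ : ℝ := (k:ℝ) * ε^2 / 2 - (Real.log m + Real.log n) with hδdef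
  have hsinh : 0 < Real.sinh ε := Real.sinh_pos_iff.mpr hε
  set ε' : ℝ := δ / (2 * k * Real.sinh ε) with hε'def
  have hε' : 0 < ε' := by
    apply div_pos hδ
    positivity
  clear_value δ ε'
  obtain ⟨p, hp0, hp1, hreg⟩ := exists_approx_cce n m hn hm u hu ε' hε'
  set f : (Fin n × Fin m) → (Fin n → Fin m) → ℝ :=
    fun c a => u c.1 (Function.update a c.1 c.2) - u c.1 a with hfdef
  have hf : ∀ c a, f c a ∈ Set.Icc (-1:ℝ) 1 := by
    intro c a
    have h1 := hu c.1 (Function.update a c.1 c.2)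
    have h2 := hu c.1 a
    exact ⟨by simp only [hfdef]; linarith [h1.1, h2.2], by simp only [hfdef]; linarith [h1.2, h2.1]⟩
  have hmean : ∀ c, ∑ a, p a * f c a ≤ ε' := fun c => hreg c.1 c.2
  have hsmall : (Fintype.card (Fin n × Fin m) : ℝ) * Real.exp (-(k*ε*ε))
      * (Real.cosh ε + ε' * Real.sinh ε)^k < 1 := by
    have hB0 : (0:ℝ) ≤ Real.cosh ε + ε' * Real.sinh ε := by
      have := Real.cosh_pos (x := ε)
      nlinarith
    have hchain1 : Real.cosh ε + ε' * Real.sinh ε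
        ≤ Real.cosh ε * Real.exp (ε' * Real.sinh ε) := by
      have h1 : 1 + ε' * Real.sinh ε ≤ Real.exp (ε' * Real.sinh ε) := by
        linarith [Real.add_one_le_exp (ε' * Real.sinh ε)]
      have h2 := Real.one_le_cosh ε
      have hx : (0:ℝ) ≤ ε' * Real.sinh ε := mul_nonneg hε'.le hsinh.le
      have h3 := mul_le_mul_of_nonneg_left h1 (by linarith : (0:ℝ) ≤ Real.cosh ε)
      nlinarith
    have hchain2 : (Real.cosh ε + ε' * Real.sinh ε)^k
        ≤ Real.exp ((k:ℝ) * ε^2 / 2) * Real.exp ((k:ℝ) * (ε' * Real.sinh ε)) := by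
      calc (Real.cosh ε + ε' * Real.sinh ε)^k
          ≤ (Real.cosh ε * Real.exp (ε' * Real.sinh ε))^k :=
            pow_le_pow_left₀ hB0 hchain1 k
        _ = (Real.cosh ε)^k * (Real.exp (ε' * Real.sinh ε))^k := mul_pow _ _ _
        _ ≤ (Real.exp (ε^2/2))^k * (Real.exp (ε' * Real.sinh ε))^k := by
            apply mul_le_mul_of_nonneg_right
              (pow_le_pow_left₀ (Real.cosh_pos (x := ε)).le (Real.cosh_le_exp_half_sq ε) k)
              (by positivity)
        _ = Real.exp ((k:ℝ) * ε^2 / 2) * Real.exp ((k:ℝ) * (ε' * Real.sinh ε)) := by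
            rw [← Real.exp_nat_mul, ← Real.exp_nat_mul]
            ring_nf
    have hkey : (k:ℝ) * (ε' * Real.sinh ε) = δ / 2 := by
      rw [hε'def]
      field_simp
    have hcard : (Fintype.card (Fin n × Fin m) : ℝ) = (n:ℝ) * m := by
      simp [Fintype.card_prod]
    have hlogN : (n:ℝ) * m = Real.exp (Real.log n + Real.log m) := by
      rw [Real.exp_add, Real.exp_log (by exact_mod_cast hn), Real.exp_log (by exact_mod_cast hm)]
    calc (Fintype.card (Fin n × Fin m) : ℝ) * Real.exp (-(k*ε*ε))
          * (Real.cosh ε + ε' * Real.sinh ε)^k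
        ≤ (Fintype.card (Fin n × Fin m) : ℝ) * Real.exp (-(k*ε*ε))
          * (Real.exp ((k:ℝ) * ε^2 / 2) * Real.exp ((k:ℝ) * (ε' * Real.sinh ε))) := by
          apply mul_le_mul_of_nonneg_left hchain2 (by positivity)
      _ = Real.exp ((Real.log n + Real.log m) + (-(k*ε*ε)) + ((k:ℝ) * ε^2 / 2) + δ/2) := by
          rw [hcard, hlogN, hkey, ← Real.exp_add, ← Real.exp_add, ← Real.exp_add]
          ring_nf
      _ = Real.exp (-δ/2) := by
          congr 1
          rw [hδdef]
          ring
      _ < 1 := Real.exp_lt_one_iff.mpr (by linarith)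
  obtain ⟨D, hD⟩ := sampling k hk0 f hf p hp0 hp1 ε ε' hε hε'.le hmean hsmall
  refine ⟨D, fun i j => ?_⟩
  have hDij := hD (i, j)
  rw [div_le_iff₀ hkr]
  have heq : ∑ l : Fin k, (u i (Function.update (D l) i j) - u i (D l))
      = ∑ l : Fin k, f (i, j) (D l) := rfl
  rw [heq]
  linarith
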